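/- Let f : ℕ → ℕ₀ with associated Dirichlet series L_f(s) = ∑_{n≥1} f(n) n^{−s} convergent in some half-plane, and suppose L_f has largest pole at α > 0 with ∑_{1 ≤ m ≤ x} f(m) ∼ (ω_α/α) x^α as x → ∞, where ω_α = Res_{s=α} L_f(s). Then for ρ > 0 and real t, the generating function G_f(z) = ∏_{n≥1} (1 − e^{−nz})^{−f(n)} satisfies |G_f(ρ + 2πit)| / G_f(ρ) ≤ ∏_{m≥1} (1 + 16‖mt‖² / (e^{mρ} m² ρ²))^{−f(m)/2}, where ‖x‖ denotes the distance from x to the nearest integer. -/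

import Mathlib

open Real Filter Topology


lemma sin_bound (θ : ℝ) : 8 * |θ - round θ|^2 ≤ 1 - Real.cos (2*π*θ) := by
  set y := θ - round θ with hy
  have hsin : Real.sin (π*θ) = (-1)^(round θ) * Real.sin (π*y) := by
    have : π * θ = π * y + (round θ) * π := by rw [hy]; ring
    rw [this, Real.sin_add_int_mul_pi]
  have hsq : Real.sin (π*θ)^2 = Real.sin (π*y)^2 := by
    rw [hsin, mul_pow]
    have : ((-1:ℝ)^(round θ))^2 = 1 := by
      rw [← zpow_natCast (((-1:ℝ))^(round θ)) 2, ← zpow_mul, mul_comm, zpow_mul]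
      norm_num
    rw [this, one_mul]
  have habs : Real.sin (π*y)^2 = Real.sin (π*|y|)^2 := by
    rcases abs_cases y with ⟨h, _⟩ | ⟨h, _⟩
    · rw [h]
    · rw [h, mul_neg, Real.sin_neg, neg_sq]
  have hy2 : |y| ≤ 1/2 := abs_sub_round θ
  have h2 : 2*|y| ≤ Real.sin (π*|y|) := by
    have := Real.mul_le_sin (x := π*|y|) (by positivity)
      (by nlinarith [Real.pi_pos])
    have hπ : (2/π) * (π*|y|) = 2*|y| := by field_simp
    linarith [hπ ▸ this]
  have hcos : 1 - Real.cos (2*π*θ) = 2 * Real.sin (π*θ)^2 := by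
    have := Real.sin_sq_eq_half_sub (π*θ)
    have h2x : 2*(π*θ) = 2*π*θ := by ring
    rw [h2x] at this
    linarith
  rw [hcos, hsq, habs]
  nlinarith [abs_nonneg y, Real.sin_nonneg_of_nonneg_of_le_pi (x := π*|y|) (by positivity) (by nlinarith [Real.pi_pos])]

lemma absSq_eq (X ρ t : ℝ) :
    (‖1 - Complex.exp ((-(X:ℂ)) * ((ρ:ℂ) + 2*Real.pi*Complex.I*t))‖)^2
      = (1 - Real.exp (-(X*ρ)))^2 + 2*Real.exp (-(X*ρ))*(1 - Real.cos (2*π*(X*t))) := by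
  set A : ℂ := (-(X:ℂ)) * ((ρ:ℂ) + 2*Real.pi*Complex.I*t) with hA
  have hre : A.re = -(X*ρ) := by simp [hA, Complex.mul_re, Complex.mul_im]
  have him : A.im = -(2*π*(X*t)) := by simp [hA, Complex.mul_re, Complex.mul_im]; ring
  rw [Complex.sq_norm, Complex.normSq_apply]
  simp only [Complex.sub_re, Complex.sub_im, Complex.one_re, Complex.one_im,
    Complex.exp_re, Complex.exp_im, hre, him]
  rw [Real.cos_neg, Real.sin_neg]
  have hpy : Real.sin (2*π*(X*t))^2 + Real.cos (2*π*(X*t))^2 = 1 := Real.sin_sq_add_cos_sq _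
  linear_combination (rexp (-(X*ρ)))^2 * hpy

lemma sq_ineq (x θ : ℝ) (hx : 0 < x) :
    (1 - rexp (-x))^2 * (1 + 16*|θ - round θ|^2/(rexp x * x^2))
      ≤ (1 - rexp (-x))^2 + 2*rexp (-x)*(1 - Real.cos (2*π*θ)) := by
  have h1 : 1 - rexp (-x) ≤ x := by nlinarith [Real.add_one_le_exp (-x)]
  have h0 : 0 ≤ 1 - rexp (-x) := by
    have : rexp (-x) ≤ 1 := Real.exp_le_one_iff.mpr (by linarith)
    linarith
  have hE : rexp (-x) * rexp x = 1 := by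
    rw [← Real.exp_add]; simp
  have hL := sin_bound θ
  have hEpos := Real.exp_pos x
  have hEpos' := Real.exp_pos (-x)
  have habs : (0:ℝ) ≤ |θ - round θ|^2 := sq_nonneg _
  have key : (1 - rexp (-x))^2 * (16*|θ - round θ|^2/(rexp x * x^2))
      ≤ 2*rexp (-x)*(1 - Real.cos (2*π*θ)) := by
    have hD : (0:ℝ) < rexp x * x^2 := by positivity
    rw [div_eq_mul_inv, ← mul_assoc]
    have hsq2 : (1 - rexp (-x))^2 ≤ x^2 := by nlinarith
    have step1 : (1 - rexp (-x))^2 * (16*|θ - round θ|^2) ≤ x^2 * (16*|θ - round θ|^2) :=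
      mul_le_mul_of_nonneg_right hsq2 (by positivity)
    have step2 : x^2 * (16*|θ - round θ|^2) * (rexp x * x^2)⁻¹
        ≤ 2*rexp (-x)*(1 - Real.cos (2*π*θ)) := by
      have hxinv : x^2 * (rexp x * x^2)⁻¹ = rexp (-x) := by
        rw [Real.exp_neg]; field_simp
      calc x^2 * (16*|θ - round θ|^2) * (rexp x * x^2)⁻¹
          = (16*|θ - round θ|^2) * (x^2 * (rexp x * x^2)⁻¹) := by ring
        _ = (16*|θ - round θ|^2) * rexp (-x) := by rw [hxinv]
        _ ≤ (2*(1 - Real.cos (2*π*θ))) * rexp (-x) := by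
            apply mul_le_mul_of_nonneg_right (by linarith) (le_of_lt hEpos')
        _ = 2*rexp (-x)*(1 - Real.cos (2*π*θ)) := by ring
    calc (1 - rexp (-x))^2 * (16*|θ - round θ|^2) * (rexp x * x^2)⁻¹
        ≤ x^2 * (16*|θ - round θ|^2) * (rexp x * x^2)⁻¹ := by
          apply mul_le_mul_of_nonneg_right step1 (by positivity)
      _ ≤ _ := step2
  nlinarith [key]

lemma pow_one_sub_norm (z : ℂ) (m : ℕ) : ‖z^m - 1‖ ≤ (1+‖z-1‖)^m - 1 := by
  induction m with
  | zero => simp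
  | succ k ih =>
    have hz : ‖z‖ ≤ 1 + ‖z-1‖ := by
      calc ‖z‖ = ‖1 + (z-1)‖ := by ring_nf
        _ ≤ ‖(1:ℂ)‖ + ‖z-1‖ := norm_add_le _ _
        _ = 1 + ‖z-1‖ := by simp
    have hdec : z^(k+1) - 1 = z^k * (z - 1) + (z^k - 1) := by ring
    calc ‖z^(k+1) - 1‖ ≤ ‖z^k * (z-1)‖ + ‖z^k - 1‖ := by rw [hdec]; exact norm_add_le _ _
      _ = ‖z‖^k * ‖z-1‖ + ‖z^k - 1‖ := by rw [norm_mul, norm_pow]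
      _ ≤ (1+‖z-1‖)^k * ‖z-1‖ + ((1+‖z-1‖)^k - 1) := by
          gcongr
      _ = (1+‖z-1‖)^(k+1) - 1 := by ring

lemma summable_rpow_exp (s ρ : ℝ) (hρ : 0 < ρ) :
    Summable (fun n : ℕ => ((n:ℝ)+1)^s * rexp (-(((n:ℝ)+1)*ρ))) := by
  set k := ⌈s⌉₊ with hk
  have hgeo : Summable (fun n : ℕ => ((n:ℝ))^k * rexp (-ρ)^n) :=
    summable_pow_mul_geometric_of_norm_lt_one k (r := rexp (-ρ))
      (by rw [Real.norm_eq_abs, abs_of_pos (Real.exp_pos _)]; exact Real.exp_lt_one_iff.mpr (by linarith))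
  have hshift : Summable (fun n : ℕ => ((n:ℝ)+1)^k * rexp (-ρ)^(n+1)) := by
    have := (summable_nat_add_iff 1).2 hgeo
    apply this.congr
    intro n; push_cast; ring
  apply hshift.of_nonneg_of_le (fun n => by positivity)
  intro n
  have h1 : ((n:ℝ)+1)^s ≤ ((n:ℝ)+1)^(k:ℝ) :=
    Real.rpow_le_rpow_of_exponent_le (by push_cast; linarith [Nat.cast_nonneg (α := ℝ) n]) (Nat.le_ceil s)
  have h2 : ((n:ℝ)+1)^(k:ℝ) = ((n:ℝ)+1)^k := Real.rpow_natCast _ k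
  have h3 : rexp (-(((n:ℝ)+1)*ρ)) = rexp (-ρ)^(n+1) := by
    rw [← Real.exp_nat_mul]; congr 1; push_cast; ring
  rw [h3]
  apply mul_le_mul_of_nonneg_right _ (by positivity)
  rw [← h2]; exact h1


set_option maxHeartbeats 2000000 in
theorem stmt12 (f : ℕ → ℕ) (α ω : ℝ) (hα : 0 < α)
    (hL : ∃ s : ℝ, Summable fun n : ℕ => (f (n + 1) : ℝ) / ((n + 1 : ℝ)) ^ s)
    (hω : Tendsto (fun x : ℝ => (∑ m ∈ Finset.Icc 1 ⌊x⌋₊, (f m : ℝ)) / x ^ α)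
      atTop (𝓝 (ω / α)))
    (ρ t : ℝ) (hρ : 0 < ρ) :
    ‖(∏' n : ℕ,
        (1 - Complex.exp (-((n : ℂ) + 1) * ((ρ : ℂ) + 2 * Real.pi * Complex.I * t))) ^
          (-(f (n + 1) : ℤ)))‖ /
      (∏' n : ℕ, (1 - Real.exp (-((n : ℝ) + 1) * ρ)) ^ (-(f (n + 1) : ℤ)))
    ≤ ∏' m : ℕ,
        (1 + 16 * |((m : ℝ) + 1) * t - round (((m : ℝ) + 1) * t)| ^ 2 /
            (Real.exp (((m : ℝ) + 1) * ρ) * ((m : ℝ) + 1) ^ 2 * ρ ^ 2)) ^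
          (-(f (m + 1) : ℝ) / 2) := by
  obtain ⟨s, hs⟩ := hL
  -- abbreviations
  set T : ℕ → ℂ := fun n =>
    (1 - Complex.exp (-((n : ℂ) + 1) * ((ρ : ℂ) + 2 * Real.pi * Complex.I * t))) ^
      (-(f (n + 1) : ℤ)) with hT
  set A : ℕ → ℝ := fun n =>
    (1 - Real.exp (-((n : ℝ) + 1) * ρ)) ^ (-(f (n + 1) : ℤ)) with hA
  set Cc : ℕ → ℝ := fun m =>
    (1 + 16 * |((m : ℝ) + 1) * t - round (((m : ℝ) + 1) * t)| ^ 2 /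
        (Real.exp (((m : ℝ) + 1) * ρ) * ((m : ℝ) + 1) ^ 2 * ρ ^ 2)) ^
      (-(f (m + 1) : ℝ) / 2) with hCc
  set E : ℕ → ℂ := fun n =>
    Complex.exp (-((n : ℂ) + 1) * ((ρ : ℂ) + 2 * Real.pi * Complex.I * t)) with hE
  set aq : ℕ → ℝ := fun n => Real.exp (-((n : ℝ) + 1) * ρ) with haq
  set b : ℕ → ℝ := fun n => ‖1 - E n‖ with hb
  set c0 : ℕ → ℝ := fun n =>
    1 + 16 * |((n : ℝ) + 1) * t - round (((n : ℝ) + 1) * t)| ^ 2 /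
        (Real.exp (((n : ℝ) + 1) * ρ) * ((n : ℝ) + 1) ^ 2 * ρ ^ 2) with hc0
  -- basic positivity facts
  have haq_lt : ∀ n, aq n < 1 := by
    intro n
    rw [haq]
    apply Real.exp_lt_one_iff.mpr
    have : (0:ℝ) ≤ (n:ℝ) := Nat.cast_nonneg n
    nlinarith
  have haq_pos : ∀ n, 0 < aq n := fun n => Real.exp_pos _
  have haq_le : ∀ n, aq n ≤ rexp (-ρ) := by
    intro n
    rw [haq]
    apply Real.exp_le_exp.mpr
    have : (0:ℝ) ≤ (n:ℝ) := Nat.cast_nonneg n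
    nlinarith
  set K : ℝ := (1 - rexp (-ρ))⁻¹ with hK
  have hKden : 0 < 1 - rexp (-ρ) := by
    have : rexp (-ρ) < 1 := Real.exp_lt_one_iff.mpr (by linarith)
    linarith
  have hKpos : 0 < K := inv_pos.mpr hKden
  have hKge1 : 1 ≤ K := by
    rw [hK]
    rw [le_inv_comm₀ one_pos hKden]
    linarith [Real.exp_pos (-ρ)]
  have ha_pos : ∀ n, 0 < 1 - aq n := fun n => by linarith [haq_lt n]
  have ha_ge : ∀ n, K⁻¹ ≤ 1 - aq n := by
    intro n
    rw [hK, inv_inv]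
    linarith [haq_le n]
  -- growth bound on f
  obtain ⟨C, hC⟩ := hs.tendsto_atTop_zero.bddAbove_range
  simp only [upperBounds, Set.mem_range, forall_exists_index] at hC
  have hfC : ∀ n : ℕ, (f (n+1) : ℝ) ≤ C * ((n:ℝ)+1)^s := by
    intro n
    have h1 : (f (n+1) : ℝ) / ((n:ℝ)+1)^s ≤ C := hC n rfl
    have hp : (0:ℝ) < ((n:ℝ)+1)^s := by
      apply Real.rpow_pos_of_pos
      positivity
    calc (f (n+1) : ℝ) = ((f (n+1) : ℝ) / ((n:ℝ)+1)^s) * ((n:ℝ)+1)^s := by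
          field_simp
      _ ≤ C * ((n:ℝ)+1)^s := mul_le_mul_of_nonneg_right h1 hp.le
  -- the central summability
  have hSaq : Summable (fun n : ℕ => (f (n+1):ℝ) * aq n) := by
    apply Summable.of_nonneg_of_le (fun n => by positivity) (fun n => ?_)
      ((summable_rpow_exp s ρ hρ).mul_left C)
    have heq : aq n = rexp (-(((n:ℝ)+1)*ρ)) := by rw [haq]; ring_nf
    rw [heq, ← mul_assoc]
    exact mul_le_mul_of_nonneg_right (hfC n) (Real.exp_pos _).le
  -- facts about b
  have hb_lb : ∀ n, 1 - aq n ≤ b n := by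
    intro n
    have h1 : ‖(1:ℂ)‖ - ‖E n‖ ≤ ‖1 - E n‖ := norm_sub_norm_le _ _
    have h2 : ‖E n‖ = aq n := by
      rw [hE, haq]
      simp only [Complex.norm_exp]
      congr 1
      simp [Complex.mul_re, Complex.mul_im]
    simpa [h2, hb] using h1
  have hb_ub : ∀ n, b n ≤ 1 + aq n := by
    intro n
    have h1 : ‖(1:ℂ) - E n‖ ≤ ‖(1:ℂ)‖ + ‖E n‖ := norm_sub_le _ _
    have h2 : ‖E n‖ = aq n := by
      rw [hE, haq]
      simp only [Complex.norm_exp]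
      congr 1
      simp [Complex.mul_re, Complex.mul_im]
    simpa [h2, hb] using h1
  have hb_pos : ∀ n, 0 < b n := fun n => lt_of_lt_of_le (ha_pos n) (hb_lb n)
  -- b squared formula
  have hb_sq : ∀ n, b n ^ 2 = (1 - aq n)^2
      + 2 * aq n * (1 - Real.cos (2*π*(((n:ℝ)+1)*t))) := by
    intro n
    have hcast : -((n : ℂ) + 1) = (-((((n:ℝ)+1) : ℝ)) : ℂ) := by push_cast; ring
    have := absSq_eq ((n:ℝ)+1) ρ t
    have harg : -((n : ℂ) + 1) * ((ρ : ℂ) + 2 * Real.pi * Complex.I * t)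
        = (-((((n:ℝ)+1):ℝ)) : ℂ) * ((ρ:ℂ) + 2*Real.pi*Complex.I*t) := by
      rw [hcast]
    have haq' : aq n = Real.exp (-(((n:ℝ)+1)*ρ)) := by
      simp only [haq]; congr 1; ring
    simp only [hb, hE]
    rw [harg, haq']
    exact this
  -- c0 facts
  have hc0_ge1 : ∀ n, 1 ≤ c0 n := by
    intro n
    rw [hc0]
    have : (0:ℝ) ≤ 16 * |((n : ℝ) + 1) * t - round (((n : ℝ) + 1) * t)| ^ 2 /
        (Real.exp (((n : ℝ) + 1) * ρ) * ((n : ℝ) + 1) ^ 2 * ρ ^ 2) := by positivity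
    linarith
  have hc0_pos : ∀ n, 0 < c0 n := fun n => lt_of_lt_of_le one_pos (hc0_ge1 n)
  -- the key pointwise inequality  (1 - aq n) * sqrt (c0 n) ≤ b n
  have hkey : ∀ n, (1 - aq n) * Real.sqrt (c0 n) ≤ b n := by
    intro n
    set x : ℝ := ((n:ℝ)+1)*ρ with hx
    have hxpos : 0 < x := by positivity
    have haq' : aq n = rexp (-x) := by
      simp only [haq]; rw [hx]; congr 1; ring
    have hc0' : c0 n = 1 + 16*|((n:ℝ)+1)*t - round (((n:ℝ)+1)*t)|^2/(rexp x * x^2) := by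
      simp only [hc0]
      have hden : rexp x * x^2 = rexp (((n:ℝ)+1)*ρ) * ((n:ℝ)+1)^2 * ρ^2 := by
        rw [hx]; ring
      rw [hden]
    have h1 := sq_ineq x (((n:ℝ)+1)*t) hxpos
    have h2 : b n ^2 = (1 - rexp (-x))^2 + 2*rexp (-x)*(1 - Real.cos (2*π*(((n:ℝ)+1)*t))) := by
      rw [hb_sq n, haq']
    have h3 : (1 - rexp (-x))^2 * c0 n ≤ b n ^ 2 := by
      rw [hc0', h2]
      exact h1
    have h4 : ((1 - aq n) * Real.sqrt (c0 n))^2 ≤ b n ^2 := by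
      rw [mul_pow, Real.sq_sqrt (hc0_pos n).le, haq']
      exact h3
    have h5 : 0 ≤ (1 - aq n) * Real.sqrt (c0 n) := by
      apply mul_nonneg (ha_pos n).le (Real.sqrt_nonneg _)
    nlinarith [hb_pos n]
  -- log bounds
  have hlog_a : ∀ n, |Real.log (1 - aq n)| ≤ K * aq n := by
    intro n
    have h1 : Real.log (1 - aq n) ≤ 0 :=
      Real.log_nonpos (ha_pos n).le (by linarith [haq_pos n])
    rw [abs_of_nonpos h1]
    have h2 : Real.log ((1 - aq n)⁻¹) ≤ (1 - aq n)⁻¹ - 1 :=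
      Real.log_le_sub_one_of_pos (inv_pos.mpr (ha_pos n))
    rw [Real.log_inv] at h2
    have h3 : (1 - aq n)⁻¹ ≤ K := by
      rw [hK]
      apply inv_anti₀ hKden
      linarith [haq_le n]
    have hne : (1 - aq n) ≠ 0 := ne_of_gt (ha_pos n)
    have h4 : (1 - aq n)⁻¹ - 1 = aq n * (1 - aq n)⁻¹ := by
      field_simp
      ring
    nlinarith [haq_pos n, ha_pos n, inv_pos.mpr (ha_pos n)]
  have hlog_b : ∀ n, |Real.log (b n)| ≤ K * aq n := by
    intro n
    rw [abs_le]
    constructor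
    · have h1 : Real.log (1 - aq n) ≤ Real.log (b n) :=
        Real.log_le_log (ha_pos n) (hb_lb n)
      have := hlog_a n
      rw [abs_le] at this
      linarith [this.1]
    · have h1 : Real.log (b n) ≤ Real.log (1 + aq n) :=
        Real.log_le_log (hb_pos n) (hb_ub n)
      have h2 : Real.log (1 + aq n) ≤ aq n :=
        by linarith [Real.log_le_sub_one_of_pos (show 0 < 1 + aq n by linarith [haq_pos n])]
      nlinarith [haq_pos n]
  have hlog_c : ∀ n, |Real.log (c0 n)| ≤ (4/ρ^2) * aq n := by
    intro n
    have h0 : 0 ≤ Real.log (c0 n) := Real.log_nonneg (hc0_ge1 n)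
    rw [abs_of_nonneg h0]
    have h1 : Real.log (c0 n) ≤ c0 n - 1 := Real.log_le_sub_one_of_pos (hc0_pos n)
    have hr : |((n : ℝ) + 1) * t - round (((n : ℝ) + 1) * t)| ≤ 1/2 := abs_sub_round _
    have hrnn : (0:ℝ) ≤ |((n : ℝ) + 1) * t - round (((n : ℝ) + 1) * t)| := abs_nonneg _
    have h2 : c0 n - 1 = 16 * |((n : ℝ) + 1) * t - round (((n : ℝ) + 1) * t)| ^ 2 /
        (Real.exp (((n : ℝ) + 1) * ρ) * ((n : ℝ) + 1) ^ 2 * ρ ^ 2) := by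
      rw [hc0]; ring
    have h3 : 16 * |((n : ℝ) + 1) * t - round (((n : ℝ) + 1) * t)| ^ 2 /
        (Real.exp (((n : ℝ) + 1) * ρ) * ((n : ℝ) + 1) ^ 2 * ρ ^ 2)
        ≤ 4 / (Real.exp (((n : ℝ) + 1) * ρ) * ρ ^ 2) := by
      apply div_le_div₀ (by norm_num) (by nlinarith [mul_self_le_mul_self hrnn hr, sq_abs (((n : ℝ) + 1) * t - round (((n : ℝ) + 1) * t))]) (by positivity)
      have h5 : (1:ℝ) ≤ ((n:ℝ)+1)^2 := by nlinarith [Nat.cast_nonneg (α := ℝ) n]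
      nlinarith [mul_le_mul_of_nonneg_left h5
        (show (0:ℝ) ≤ rexp (((n:ℝ)+1)*ρ) * ρ^2 by positivity)]
    have h4 : 4 / (Real.exp (((n : ℝ) + 1) * ρ) * ρ ^ 2) = (4/ρ^2) * aq n := by
      simp only [haq]
      rw [show -((n:ℝ)+1) * ρ = -(((n:ℝ)+1) * ρ) by ring, Real.exp_neg]
      field_simp
    calc Real.log (c0 n) ≤ c0 n - 1 := h1
      _ = _ := h2
      _ ≤ _ := h3
      _ = _ := h4
  -- more positivity and term identities
  have hsc_pos : ∀ n, 0 < Real.sqrt (c0 n) := fun n => Real.sqrt_pos.mpr (hc0_pos n)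
  have hAeq : ∀ n, A n = (1 - aq n) ^ (-(f (n+1):ℤ)) := fun n => by simp only [hA, haq]
  have hApos : ∀ n, 0 < A n := fun n => by rw [hAeq n]; exact zpow_pos (ha_pos n) _
  have hrpow_sqrt : ∀ (y : ℝ), 0 < y → ∀ (m : ℕ),
      y ^ (-(m:ℝ)/2) = Real.sqrt y ^ (-(m:ℤ)) := by
    intro y hy m
    rw [Real.sqrt_eq_rpow, ← Real.rpow_intCast (y ^ ((1:ℝ)/2)) (-(m:ℤ)), ← Real.rpow_mul hy.le]
    congr 1
    push_cast
    ring
  have hCceq : ∀ n, Cc n = Real.sqrt (c0 n) ^ (-(f (n+1):ℤ)) := by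
    intro n
    have hCc' : Cc n = c0 n ^ (-(f (n+1):ℝ)/2) := by simp only [hCc, hc0]
    rw [hCc', hrpow_sqrt (c0 n) (hc0_pos n)]
  have hCcpos : ∀ n, 0 < Cc n := fun n => by rw [hCceq n]; exact zpow_pos (hsc_pos n) _
  have hBpos : ∀ n, 0 < b n ^ (-(f (n+1):ℤ)) := fun n => zpow_pos (hb_pos n) _
  have hTabs : ∀ n, ‖T n‖ = b n ^ (-(f (n+1):ℤ)) := by
    intro n
    simp only [hT, hb, hE]
    exact norm_zpow _ _
  -- pointwise product inequality
  have hptw : ∀ n, b n ^ (-(f (n+1):ℤ)) ≤ A n * Cc n := by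
    intro n
    rw [hAeq n, hCceq n]
    have hbase : (1 - aq n) * Real.sqrt (c0 n) ≤ b n := hkey n
    have hbase_pos : 0 < (1 - aq n) * Real.sqrt (c0 n) := mul_pos (ha_pos n) (hsc_pos n)
    have hpow : ((1 - aq n) * Real.sqrt (c0 n)) ^ (f (n+1)) ≤ b n ^ (f (n+1)) :=
      pow_le_pow_left₀ hbase_pos.le hbase _
    have hinv : (b n ^ (f (n+1)))⁻¹ ≤ (((1 - aq n) * Real.sqrt (c0 n)) ^ (f (n+1)))⁻¹ :=
      inv_anti₀ (by positivity) hpow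
    calc b n ^ (-(f (n+1):ℤ)) = (b n ^ (f (n+1)))⁻¹ := by rw [zpow_neg, zpow_natCast]
      _ ≤ (((1 - aq n) * Real.sqrt (c0 n)) ^ (f (n+1)))⁻¹ := hinv
      _ = (1 - aq n) ^ (-(f (n+1):ℤ)) * Real.sqrt (c0 n) ^ (-(f (n+1):ℤ)) := by
          rw [mul_pow, mul_inv, zpow_neg, zpow_natCast, zpow_neg, zpow_natCast]
  -- summability of the logarithms
  have habsm : ∀ n, |((-(f (n+1):ℤ) : ℤ) : ℝ)| = (f (n+1):ℝ) := by
    intro n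
    push_cast
    rw [abs_neg, abs_of_nonneg (by positivity)]
  have hSlogA : Summable (fun n => Real.log (A n)) := by
    apply Summable.of_norm_bounded (g := fun n => K * ((f (n+1):ℝ) * aq n)) (hSaq.mul_left K)
    intro n
    rw [Real.norm_eq_abs, hAeq n, Real.log_zpow, abs_mul, habsm n]
    calc (f (n+1):ℝ) * |Real.log (1 - aq n)| ≤ (f (n+1):ℝ) * (K * aq n) :=
          mul_le_mul_of_nonneg_left (hlog_a n) (by positivity)
      _ = K * ((f (n+1):ℝ) * aq n) := by ring
  have hSlogB : Summable (fun n => Real.log (b n ^ (-(f (n+1):ℤ)))) := by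
    apply Summable.of_norm_bounded (g := fun n => K * ((f (n+1):ℝ) * aq n)) (hSaq.mul_left K)
    intro n
    rw [Real.norm_eq_abs, Real.log_zpow, abs_mul, habsm n]
    calc (f (n+1):ℝ) * |Real.log (b n)| ≤ (f (n+1):ℝ) * (K * aq n) :=
          mul_le_mul_of_nonneg_left (hlog_b n) (by positivity)
      _ = K * ((f (n+1):ℝ) * aq n) := by ring
  have hSlogC : Summable (fun n => Real.log (Cc n)) := by
    apply Summable.of_norm_bounded (g := fun n => (2/ρ^2) * ((f (n+1):ℝ) * aq n))
      (hSaq.mul_left (2/ρ^2))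
    intro n
    have hCc' : Cc n = c0 n ^ (-(f (n+1):ℝ)/2) := by simp only [hCc, hc0]
    rw [Real.norm_eq_abs, hCc', Real.log_rpow (hc0_pos n), abs_mul]
    have h1 : |(-(f (n+1):ℝ)/2)| = (f (n+1):ℝ)/2 := by
      rw [abs_div, abs_neg, abs_of_nonneg (by positivity : (0:ℝ) ≤ (f (n+1):ℝ))]
      norm_num
    rw [h1]
    calc (f (n+1):ℝ)/2 * |Real.log (c0 n)| ≤ (f (n+1):ℝ)/2 * ((4/ρ^2) * aq n) :=
          mul_le_mul_of_nonneg_left (hlog_c n) (by positivity)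
      _ = (2/ρ^2) * ((f (n+1):ℝ) * aq n) := by ring
  -- the sum inequality
  have hsum_ineq : ∑' n, Real.log (b n ^ (-(f (n+1):ℤ)))
      ≤ (∑' n, Real.log (A n)) + ∑' n, Real.log (Cc n) := by
    rw [← Summable.tsum_add hSlogA hSlogC]
    apply Summable.tsum_le_tsum _ hSlogB (hSlogA.add hSlogC)
    intro n
    have h1 : Real.log (b n ^ (-(f (n+1):ℤ))) ≤ Real.log (A n * Cc n) :=
      Real.log_le_log (hBpos n) (hptw n)
    rwa [Real.log_mul (ne_of_gt (hApos n)) (ne_of_gt (hCcpos n))] at h1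
  -- products as exponentials
  have hPA : rexp (∑' n, Real.log (A n)) = ∏' n, A n := by
    simpa using Real.rexp_tsum_eq_tprod (f := A) hApos hSlogA
  have hPB : rexp (∑' n, Real.log (b n ^ (-(f (n+1):ℤ)))) = ∏' n, b n ^ (-(f (n+1):ℤ)) := by
    simpa using Real.rexp_tsum_eq_tprod (f := fun n => b n ^ (-(f (n+1):ℤ))) hBpos hSlogB
  have hPC : rexp (∑' n, Real.log (Cc n)) = ∏' n, Cc n := by
    simpa using Real.rexp_tsum_eq_tprod (f := Cc) hCcpos hSlogC
  -- multipliability of the complex product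
  have hT0 : ∀ n, (1 - E n) ≠ 0 := by
    intro n h
    have hbn := hb_pos n
    simp only [hb] at hbn
    rw [h] at hbn
    simp at hbn
  have hTne : ∀ n, T n ≠ 0 := fun n => by
    simp only [hT, hE]
    exact zpow_ne_zero _ (by simpa only [hE] using hT0 n)
  have hEabs : ∀ n, ‖E n‖ = aq n := by
    intro n
    simp only [hE, haq]
    simp only [Complex.norm_exp]
    congr 1
    simp [Complex.mul_re, Complex.mul_im]
  have hz : ∀ n, T n = ((1 - E n)⁻¹) ^ (f (n+1)) := by
    intro n
    simp only [hT, hE]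
    rw [zpow_neg, zpow_natCast, inv_pow]
  have hu : ∀ n, ‖(1 - E n)⁻¹ - 1‖ ≤ K * aq n := by
    intro n
    have h1 : (1 - E n)⁻¹ - 1 = E n * (1 - E n)⁻¹ := by
      field_simp [hT0 n]
      ring
    rw [h1, norm_mul, norm_inv, hEabs n]
    have hb' : ‖1 - E n‖ = b n := by simp only [hb]
    rw [hb']
    have hKinv : K⁻¹ ≤ b n := le_trans (ha_ge n) (hb_lb n)
    have hbinv : (b n)⁻¹ ≤ K := inv_le_of_inv_le₀ hKpos hKinv
    calc aq n * (b n)⁻¹ ≤ aq n * K :=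
          mul_le_mul_of_nonneg_left hbinv (haq_pos n).le
      _ = K * aq n := by ring
  have hKinvpos : 0 < K⁻¹ := inv_pos.mpr hKpos
  have hevent : ∀ᶠ n in atTop, (f (n+1):ℝ) * aq n ≤ K⁻¹ :=
    hSaq.tendsto_atTop_zero.eventually (eventually_le_nhds hKinvpos)
  obtain ⟨N, hN⟩ := eventually_atTop.mp hevent
  have hexp3 : ∀ v : ℝ, 0 ≤ v → v ≤ 1 → rexp v - 1 ≤ 3 * v := by
    intro v hv0 hv1
    have he1 : rexp v ≤ rexp 1 := Real.exp_le_exp.mpr hv1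
    have he2 : rexp 1 < 3 := lt_trans Real.exp_one_lt_d9 (by norm_num)
    have hh : -v + 1 ≤ (rexp v)⁻¹ := by
      rw [← Real.exp_neg]
      exact Real.add_one_le_exp (-v)
    have hpos := Real.exp_pos v
    have hh2 : (-v + 1) * rexp v ≤ 1 := by
      calc (-v + 1) * rexp v ≤ (rexp v)⁻¹ * rexp v :=
            mul_le_mul_of_nonneg_right hh hpos.le
        _ = 1 := inv_mul_cancel₀ (ne_of_gt hpos)
    nlinarith
  have hbound : ∀ k : ℕ, ‖1 - T (k + N)‖ ≤ 3 * K * ((f ((k+N)+1):ℝ) * aq (k+N)) := by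
    intro k
    set n := k + N with hn
    have hnN : N ≤ n := Nat.le_add_left N k
    have hNn := hN n hnN
    have hmu : K * ((f (n+1):ℝ) * aq n) ≤ 1 := by
      calc K * ((f (n+1):ℝ) * aq n) ≤ K * K⁻¹ :=
            mul_le_mul_of_nonneg_left hNn hKpos.le
        _ = 1 := mul_inv_cancel₀ (ne_of_gt hKpos)
    set u := ‖(1 - E n)⁻¹ - 1‖ with hudef
    have hu0 : 0 ≤ u := norm_nonneg _
    have huK : u ≤ K * aq n := hu n
    have hfu : (f (n+1):ℝ) * u ≤ 1 := by
      calc (f (n+1):ℝ) * u ≤ (f (n+1):ℝ) * (K * aq n) :=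
            mul_le_mul_of_nonneg_left huK (by positivity)
        _ = K * ((f (n+1):ℝ) * aq n) := by ring
        _ ≤ 1 := hmu
    have h2 : ‖T n - 1‖ ≤ (1 + u)^(f (n+1)) - 1 := by
      rw [hz n]
      exact pow_one_sub_norm _ _
    have h3 : (1 + u)^(f (n+1)) ≤ rexp ((f (n+1):ℝ) * u) := by
      calc (1 + u)^(f (n+1)) ≤ (rexp u)^(f (n+1)) :=
            pow_le_pow_left₀ (by positivity) (by linarith [Real.add_one_le_exp u]) _
        _ = rexp ((f (n+1):ℝ) * u) := by rw [← Real.exp_nat_mul]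
    have h5 : rexp ((f (n+1):ℝ) * u) - 1 ≤ 3 * ((f (n+1):ℝ) * u) :=
      hexp3 _ (by positivity) hfu
    have h6 : 3 * ((f (n+1):ℝ) * u) ≤ 3 * K * ((f (n+1):ℝ) * aq n) := by
      have : (f (n+1):ℝ) * u ≤ (f (n+1):ℝ) * (K * aq n) :=
        mul_le_mul_of_nonneg_left huK (by positivity)
      nlinarith
    calc ‖1 - T n‖ = ‖T n - 1‖ := norm_sub_rev _ _
      _ ≤ (1 + u)^(f (n+1)) - 1 := h2
      _ ≤ rexp ((f (n+1):ℝ) * u) - 1 := by linarith [h3]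
      _ ≤ 3 * ((f (n+1):ℝ) * u) := h5
      _ ≤ 3 * K * ((f (n+1):ℝ) * aq n) := h6
  have hg : Summable (fun k : ℕ => 3 * K * ((f ((k+N)+1):ℝ) * aq (k+N))) :=
    (summable_nat_add_iff N).2 (hSaq.mul_left (3*K))
  have hS1 : Summable (fun k : ℕ => 1 - T (k + N)) :=
    Summable.of_norm_bounded hg hbound
  have hsum1 : Summable (fun n : ℕ => 1 - T n) := (summable_nat_add_iff N).1 hS1
  have hlogT : Summable (fun n => Complex.log (T n)) := by
    have h := hsum1.clog_one_sub
    apply h.congr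
    intro n
    rw [sub_sub_cancel]
  have hmul : Multipliable T :=
    Complex.multipliable_of_summable_log hlogT
  -- final assembly
  have habs : ‖∏' n, T n‖ = ∏' n, b n ^ (-(f (n+1):ℤ)) := by
    rw [hmul.norm_tprod]
    exact tprod_congr hTabs
  rw [habs, ← hPA, ← hPB, ← hPC, ← Real.exp_sub]
  exact Real.exp_le_exp.mpr (by linarith [hsum_ineq])
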